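/- Define vector fields in label coordinates u = -c₀ + ce^ξ cos θ, w = ce^ξ sin θ with ξ = k(r-m(s)), θ = k(q-ct). The mixed partial compatibility conditions P_{sr} = P_{rs} hold for the system P_q = 0, P_s = -ρ(kc²+f̂c)m'(s)e^{2ξ} + ρ(f+βs)c₀, P_r = ρ(kc²+f̂c)e^{2ξ} - ρ(f̂c₀+g), where ρ(s,r) = F(e^{2ξ}/(2k) - r + c₀m(s)/c), m(s) = (2fcs+βcs²)/(2(f̂c₀+g)), kc²+f̂c = f̂c₀+g, and F is C¹. -/

import Mathlib

open Real

/-- mixed partial compatibility P_{sr} = P_{rs} for the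
label-coordinate pressure gradient system. -/
theorem pressure_gradient_compatibility
    (k c c₀ f β fhat g : ℝ) (hk : 0 < k) (hc : 0 < c)
    (hghat : 0 < fhat * c₀ + g)
    (hdisp : k * c ^ 2 + fhat * c = fhat * c₀ + g)
    (F : ℝ → ℝ) (hF : ContDiff ℝ 1 F)
    (m : ℝ → ℝ)
    (hm : ∀ s, m s = (2 * f * c * s + β * c * s ^ 2) / (2 * (fhat * c₀ + g)))
    (ρ Ps Pr : ℝ → ℝ → ℝ)
    (hρ : ∀ s r, ρ s r =
      F (exp (2 * k * (r - m s)) / (2 * k) - r + c₀ * m s / c))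
    (hPs : ∀ s r, Ps s r =
      -(ρ s r * (k * c ^ 2 + fhat * c) * deriv m s * exp (2 * k * (r - m s))) +
        ρ s r * (f + β * s) * c₀)
    (hPr : ∀ s r, Pr s r =
      ρ s r * (k * c ^ 2 + fhat * c) * exp (2 * k * (r - m s)) -
        ρ s r * (fhat * c₀ + g)) :
    ∀ s r, deriv (fun r' => Ps s r') r = deriv (fun s' => Pr s' r) s := by
  intro s r
  have hGne : (fhat * c₀ + g) ≠ 0 := ne_of_gt hghat
  have hFd : Differentiable ℝ F := hF.differentiable one_ne_zero
  have hm' : m = fun x => (2 * f * c * x + β * c * x ^ 2) / (2 * (fhat * c₀ + g)) :=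
    funext hm
  have hMder : HasDerivAt m ((f + β * s) * c / (fhat * c₀ + g)) s := by
    rw [hm']
    have h1 : HasDerivAt (fun x : ℝ => 2 * f * c * x) (2 * f * c) s := by
      simpa using (hasDerivAt_id s).const_mul (2 * f * c)
    have h2 : HasDerivAt (fun x : ℝ => β * c * x ^ 2) (β * c * (2 * s)) s := by
      have := (hasDerivAt_pow 2 s).const_mul (β * c)
      simpa [mul_comm, mul_assoc, mul_left_comm] using this
    have h3 := (h1.add h2).div_const (2 * (fhat * c₀ + g))
    refine h3.congr_deriv ?_
    field_simp
  have hmderiv : deriv m s = (f + β * s) * c / (fhat * c₀ + g) := hMder.deriv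
  simp only [hPs, hPr, hρ, hmderiv]
  -- r-direction derivatives
  have hlin : HasDerivAt (fun r' : ℝ => 2 * k * (r' - m s)) (2 * k) r := by
    simpa using ((hasDerivAt_id r).sub_const (m s)).const_mul (2 * k)
  have hE : HasDerivAt (fun r' : ℝ => Real.exp (2 * k * (r' - m s)))
      (Real.exp (2 * k * (r - m s)) * (2 * k)) r := hlin.exp
  have hA : HasDerivAt
      (fun r' : ℝ => Real.exp (2 * k * (r' - m s)) / (2 * k) - r' + c₀ * m s / c)
      (Real.exp (2 * k * (r - m s)) * (2 * k) / (2 * k) - 1) r := by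
    simpa using ((hE.div_const (2 * k)).sub (hasDerivAt_id r)).add_const (c₀ * m s / c)
  have hFr : HasDerivAt
      (fun r' : ℝ => F (Real.exp (2 * k * (r' - m s)) / (2 * k) - r' + c₀ * m s / c))
      (deriv F (Real.exp (2 * k * (r - m s)) / (2 * k) - r + c₀ * m s / c) *
        (Real.exp (2 * k * (r - m s)) * (2 * k) / (2 * k) - 1)) r :=
    (hFd _).hasDerivAt.comp r hA
  have hL := ((((hFr.mul_const (k * c ^ 2 + fhat * c)).mul_const
      ((f + β * s) * c / (fhat * c₀ + g))).mul hE).neg).add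
      ((hFr.mul_const (f + β * s)).mul_const c₀)
  -- s-direction derivatives
  have hlin2 : HasDerivAt (fun s' : ℝ => 2 * k * (r - m s'))
      (2 * k * (0 - (f + β * s) * c / (fhat * c₀ + g))) s :=
    ((hasDerivAt_const s r).sub hMder).const_mul (2 * k)
  have hE2 : HasDerivAt (fun s' : ℝ => Real.exp (2 * k * (r - m s')))
      (Real.exp (2 * k * (r - m s)) * (2 * k * (0 - (f + β * s) * c / (fhat * c₀ + g)))) s :=
    hlin2.exp
  have hA2 : HasDerivAt
      (fun s' : ℝ => Real.exp (2 * k * (r - m s')) / (2 * k) - r + c₀ * m s' / c)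
      (Real.exp (2 * k * (r - m s)) * (2 * k * (0 - (f + β * s) * c / (fhat * c₀ + g))) / (2 * k)
        + c₀ * ((f + β * s) * c / (fhat * c₀ + g)) / c) s :=
    ((hE2.div_const (2 * k)).sub_const r).add ((hMder.const_mul c₀).div_const c)
  have hFs : HasDerivAt
      (fun s' : ℝ => F (Real.exp (2 * k * (r - m s')) / (2 * k) - r + c₀ * m s' / c))
      (deriv F (Real.exp (2 * k * (r - m s)) / (2 * k) - r + c₀ * m s / c) *
        (Real.exp (2 * k * (r - m s)) * (2 * k * (0 - (f + β * s) * c / (fhat * c₀ + g))) / (2 * k)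
          + c₀ * ((f + β * s) * c / (fhat * c₀ + g)) / c)) s :=
    (hFd _).hasDerivAt.comp s hA2
  have hR := ((hFs.mul_const (k * c ^ 2 + fhat * c)).mul hE2).sub
      (hFs.mul_const (fhat * c₀ + g))
  erw [hL.deriv, hR.deriv]
  rw [hdisp]
  set E := Real.exp (2 * k * (r - m s))
  set X := F (E / (2 * k) - r + c₀ * m s / c)
  set D := deriv F (E / (2 * k) - r + c₀ * m s / c)
  have hk0 : k ≠ 0 := hk.ne'
  field_simp
  ring
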